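/- Fix positive integers s, t, α with α ≤ min s t, and a positive integer v with α * v = (s+1) * (s*t + α). Set k = s*(t+1), λ = s − 1 + t*(α − 1), μ = α*(t+1). Let G be a simple graph on Fin v with G.IsSRGWith v k λ μ. Let p be a prime with p ∤ v and p ∤ (s + t + 1 − α). Let A := G.adjMatrix (ZMod p), J the all-ones matrix over ZMod p, and 𝒜 the (ZMod p)-subalgebra of Matrix (Fin v) (Fin v) (ZMod p) spanned by {1, A, J}. Then the Jacobson radical of 𝒜 is zero. -/

import Mathlib

open Matrix

private lemma auxN {F : Type*} [Field F] {n : Type*} [Fintype n] [DecidableEq n]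
    {i0 i1 : n} (hne : i0 ≠ i1)
    {Jm : Matrix n n F} (hJ : ∀ i j, Jm i j = 1) {V : F} (hV : V ≠ 0)
    (hJJ : Jm * Jm = V • Jm) (a b : F)
    (hnil : IsNilpotent (a • (1 : Matrix n n F) + b • Jm)) : a = 0 ∧ b = 0 := by
  obtain ⟨m, hm⟩ := hnil
  set y : Matrix n n F := a • 1 + b • Jm with hy
  have hym : y ^ (m + 1) = 0 := by rw [pow_succ, hm, Matrix.zero_mul]
  have hyJ : y * Jm = (a + b * V) • Jm := by
    rw [hy, add_mul, smul_mul_assoc, smul_mul_assoc, Matrix.one_mul, hJJ, smul_smul, ← add_smul]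
  set γ := a + b * V with hγ
  have hpow : ∀ k, y ^ k * Jm = γ ^ k • Jm := by
    intro k; induction k with
    | zero => simp
    | succ k ih =>
        rw [pow_succ, Matrix.mul_assoc, hyJ, Matrix.mul_smul, ih, smul_smul, mul_comm, ← pow_succ]
  have hγ0 : γ = 0 := by
    have h1 : γ ^ (m + 1) • Jm = 0 := by rw [← hpow, hym, Matrix.zero_mul]
    have h2 := congrFun (congrFun h1 i0) i0
    simp only [Matrix.smul_apply, hJ, smul_eq_mul, mul_one, Matrix.zero_apply] at h2
    exact pow_eq_zero_iff (Nat.succ_ne_zero m) |>.mp h2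
  have hbγ : b * γ = 0 := by rw [hγ0, mul_zero]
  have hyy : y * y = a • y := by
    have h : y * y = a • y + (b * γ) • Jm := by
      rw [hγ]
      simp only [hy, add_mul, mul_add, smul_mul_assoc, Matrix.mul_smul, Matrix.one_mul,
        Matrix.mul_one, hJJ, smul_add, smul_smul]
      match_scalars <;> ring
    rw [h, hbγ, zero_smul, add_zero]
  have hpow2 : ∀ k, y ^ (k + 1) = a ^ k • y := by
    intro k; induction k with
    | zero => simp
    | succ k ih =>
        rw [pow_succ, ih, smul_mul_assoc, hyy, smul_smul, mul_comm, ← pow_succ']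
  have h0 : a ^ m • y = 0 := by rw [← hpow2, hym]
  by_cases ha : a = 0
  · refine ⟨ha, ?_⟩
    rw [hγ] at hγ0; rw [ha, zero_add] at hγ0
    exact (mul_eq_zero.mp hγ0).resolve_right hV
  · have hy0 : y = 0 := by
      rcases smul_eq_zero.mp h0 with h | h
      · exact absurd (pow_eq_zero_iff'.mp h).1 ha
      · exact h
    have h2 := congrFun (congrFun hy0 i0) i1
    simp only [hy, Matrix.add_apply, Matrix.smul_apply, Matrix.one_apply_ne hne, hJ,
      smul_eq_mul, mul_zero, mul_one, zero_add, Matrix.zero_apply] at h2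
    rw [hγ, h2, zero_mul, add_zero] at hγ0
    exact absurd hγ0 ha

private lemma auxBranch {F : Type*} [Field F] {n : Type*} [Fintype n] [DecidableEq n]
    {i0 i1 : n} (hne : i0 ≠ i1)
    {A Jm : Matrix n n F} (hJ : ∀ i j, Jm i j = 1) {V : F} (hV : V ≠ 0)
    (hJJ : Jm * Jm = V • Jm)
    {K M ρ σ : F}
    (hJA : Jm * A = K • Jm)
    (hAA : A * A = (ρ + σ) • A - (ρ * σ) • 1 + M • Jm)
    {a b c : F} (hw : a + b * σ ≠ 0)
    {N : ℕ} (hxN : (a • 1 + b • A + c • Jm) ^ N = 0)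
    (hxJ : (a • 1 + b • A + c • Jm) * Jm = 0) :
    a • (1 : Matrix n n F) + b • A + c • Jm = 0 := by
  set x : Matrix n n F := a • 1 + b • A + c • Jm with hxdef
  set w := a + b * σ with hwdef
  set C := b * M + c * (K - ρ) with hCdef
  set y := x * (A - ρ • 1) with hydef
  have hIy : y = w • (A - ρ • 1) + C • Jm := by
    rw [hydef, hxdef, hwdef, hCdef]
    simp only [mul_sub, add_mul, smul_mul_assoc, Matrix.mul_smul, Matrix.one_mul,
      Matrix.mul_one, hAA, hJA, smul_add, smul_sub, smul_smul]
    match_scalars <;> ring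
  have hxy : x * y = w • y := by
    conv_lhs => rw [hIy]
    rw [mul_add, Matrix.mul_smul, Matrix.mul_smul, hxJ, smul_zero, add_zero, ← hydef]
  have hpy : ∀ k, x ^ k * y = w ^ k • y := by
    intro k; induction k with
    | zero => simp
    | succ k ih =>
        rw [pow_succ', Matrix.mul_assoc, ih, Matrix.mul_smul, hxy, smul_smul, ← pow_succ]
  have h0 : w ^ N • y = 0 := by rw [← hpy, hxN, Matrix.zero_mul]
  have hy0 : y = 0 := by
    rcases smul_eq_zero.mp h0 with h | h
    · exact absurd (pow_eq_zero_iff'.mp h).1 hw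
    · exact h
  rw [hy0] at hIy
  have hA : w • A = (w * ρ) • (1 : Matrix n n F) - C • Jm := by
    have h := hIy.symm
    rw [smul_sub, smul_smul] at h
    rw [sub_add_eq_add_sub, sub_eq_zero] at h
    rw [eq_sub_iff_add_eq, h]
  have hwx : w • x = (w * (a + b * ρ)) • (1 : Matrix n n F) + (w * c - b * C) • Jm := by
    rw [hxdef, smul_add, smul_add, smul_comm w b A, hA]
    match_scalars <;> ring
  have hnil' : IsNilpotent ((w * (a + b * ρ)) • (1 : Matrix n n F) + (w * c - b * C) • Jm) :=
    ⟨N, by rw [← hwx, smul_pow, hxN, smul_zero]⟩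
  obtain ⟨h1, h2⟩ := auxN hne hJ hV hJJ _ _ hnil'
  have : w • x = 0 := by rw [hwx, h1, h2, zero_smul, zero_smul, add_zero]
  rcases smul_eq_zero.mp this with h | h
  · exact absurd h hw
  · exact h

private lemma auxMain {F : Type*} [Field F] {n : Type*} [Fintype n] [DecidableEq n]
    {i0 i1 : n} (hne : i0 ≠ i1)
    {A Jm : Matrix n n F} (hJ : ∀ i j, Jm i j = 1)
    {V K M r s' : F} (hV : V ≠ 0) (hrs : r - s' ≠ 0)
    (hJJ : Jm * Jm = V • Jm) (hAJ : A * Jm = K • Jm) (hJA : Jm * A = K • Jm)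
    (hAA : A * A = (r + s') • A - (r * s') • 1 + M • Jm)
    (a b c : F) (hnil : IsNilpotent (a • 1 + b • A + c • Jm)) :
    a • (1 : Matrix n n F) + b • A + c • Jm = 0 := by
  set x : Matrix n n F := a • 1 + b • A + c • Jm with hxdef
  obtain ⟨m, hm⟩ := hnil
  have hxN : x ^ (m + 1) = 0 := by rw [pow_succ, hm, Matrix.zero_mul]
  set θ := a + b * K + c * V with hθdef
  have hxJ : x * Jm = θ • Jm := by
    rw [hxdef, hθdef]
    simp only [add_mul, smul_mul_assoc, Matrix.one_mul, hAJ, hJJ, smul_smul]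
    match_scalars <;> ring
  have hpθ : ∀ k, x ^ k * Jm = θ ^ k • Jm := by
    intro k; induction k with
    | zero => simp
    | succ k ih =>
        rw [pow_succ', Matrix.mul_assoc, ih, Matrix.mul_smul, hxJ, smul_smul, ← pow_succ]
  have hθ0 : θ = 0 := by
    have h1 : θ ^ (m + 1) • Jm = 0 := by rw [← hpθ, hxN, Matrix.zero_mul]
    have h2 := congrFun (congrFun h1 i0) i0
    simp only [Matrix.smul_apply, hJ, smul_eq_mul, mul_one, Matrix.zero_apply] at h2
    exact pow_eq_zero_iff (Nat.succ_ne_zero m) |>.mp h2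
  have hxJ0 : x * Jm = 0 := by rw [hxJ, hθ0, zero_smul]
  by_cases hw : a + b * s' = 0
  · by_cases hu : a + b * r = 0
    · have hb : b = 0 := by
        have h : b * (r - s') = 0 := by rw [mul_sub]; linear_combination hu - hw
        exact (mul_eq_zero.mp h).resolve_right hrs
      have ha : a = 0 := by rw [hb, zero_mul, add_zero] at hu; exact hu
      have hc : c = 0 := by
        rw [hθdef, ha, hb, zero_mul, zero_add, zero_add] at hθ0
        exact (mul_eq_zero.mp hθ0).resolve_right hV
      rw [hxdef, ha, hb, hc, zero_smul, zero_smul, zero_smul, add_zero, add_zero]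
    · have hAA' : A * A = (s' + r) • A - (s' * r) • 1 + M • Jm := by
        rw [hAA, add_comm r s', mul_comm r s']
      exact auxBranch hne hJ hV hJJ hJA hAA' hu hxN hxJ0
  · exact auxBranch hne hJ hV hJJ hJA hAA hw hxN hxJ0

set_option synthInstance.maxHeartbeats 1000000
theorem stmt_7 (s t α v : ℕ) (hs : 0 < s) (ht : 0 < t) (hα : 0 < α)
    (hmin : α ≤ min s t) (hv : 0 < v)
    (hveq : α * v = (s + 1) * (s * t + α))
    (G : SimpleGraph (Fin v)) [DecidableRel G.Adj]
    (hG : G.IsSRGWith v (s * (t + 1)) (s - 1 + t * (α - 1)) (α * (t + 1)))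
    (p : ℕ) (hp : p.Prime) [Fact p.Prime]
    (hpv : ¬ p ∣ v) (hpr : ¬ p ∣ (s + t + 1 - α))
    (𝒜 : Subalgebra (ZMod p) (Matrix (Fin v) (Fin v) (ZMod p)))
    (h𝒜 : Subalgebra.toSubmodule 𝒜 =
      Submodule.span (ZMod p)
        {(1 : Matrix (Fin v) (Fin v) (ZMod p)), G.adjMatrix (ZMod p),
          Matrix.of fun _ _ => (1 : ZMod p)}) :
    Ideal.jacobson (⊥ : Ideal 𝒜) = ⊥ := by
  have hαs : α ≤ s := le_trans hmin (min_le_left _ _)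
  have hαt : α ≤ t := le_trans hmin (min_le_right _ _)
  have hv2 : 2 ≤ v := by
    have h1 : α ≤ s * t := le_trans hαs (Nat.le_mul_of_pos_right s ht)
    have h3 : α * 2 ≤ α * v := by nlinarith
    exact Nat.le_of_mul_le_mul_left h3 hα
  set F := ZMod p
  set A : Matrix (Fin v) (Fin v) F := G.adjMatrix F with hAdef
  set Jm : Matrix (Fin v) (Fin v) F := Matrix.of fun _ _ => (1 : F) with hJdef
  have hJ : ∀ i j, Jm i j = 1 := fun i j => rfl
  set i0 : Fin v := ⟨0, by omega⟩
  set i1 : Fin v := ⟨1, by omega⟩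
  have hne : i0 ≠ i1 := by simp [i0, i1, Fin.ext_iff]
  -- scalars
  set K : F := ((s * (t + 1) : ℕ) : F) with hKdef
  set V : F := (v : F) with hVdef
  set M : F := ((α * (t + 1) : ℕ) : F) with hMdef
  set r : F := ((s - α : ℕ) : F) with hrdef
  set s' : F := -((t + 1 : ℕ) : F) with hsdef
  have hV : V ≠ 0 := fun h => hpv ((ZMod.natCast_eq_zero_iff v p).mp h)
  have hrs : r - s' ≠ 0 := by
    have h1 : r - s' = ((s + t + 1 - α : ℕ) : F) := by
      rw [hrdef, hsdef, sub_neg_eq_add, ← Nat.cast_add]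
      congr 1
      omega
    rw [h1]
    exact fun h => hpr ((ZMod.natCast_eq_zero_iff _ p).mp h)
  -- matrix identities
  have hJJ : Jm * Jm = V • Jm := by
    ext i j
    simp [Matrix.mul_apply, hJdef, Finset.sum_const, Finset.card_univ, hVdef]
  have hAJ : A * Jm = K • Jm := by
    ext i j
    simp only [Matrix.mul_apply, hJdef, Matrix.of_apply, mul_one, Matrix.smul_apply,
      smul_eq_mul, hAdef, SimpleGraph.adjMatrix_apply]
    rw [Finset.sum_boole, ← SimpleGraph.neighborFinset_eq_filter]
    rw [show (G.neighborFinset i).card = G.degree i from rfl, hG.regular i]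
  have hJA : Jm * A = K • Jm := by
    have h := congrArg Matrix.transpose hAJ
    rw [Matrix.transpose_mul, Matrix.transpose_smul] at h
    have hJt : Jmᵀ = Jm := by ext i j; rfl
    have hAt : Aᵀ = A := by rw [hAdef, SimpleGraph.transpose_adjMatrix]
    rwa [hJt, hAt] at h
  have hcompl : Gᶜ.adjMatrix F = Jm - 1 - A := by
    ext i j
    by_cases h : i = j
    · subst h; simp [hAdef, hJ, Matrix.one_apply]
    · by_cases h2 : G.Adj i j <;>
        simp [h, h2, Matrix.one_apply, hJ, SimpleGraph.compl_adj, hAdef]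
  have hAA : A * A = (r + s') • A - (r * s') • 1 + M • Jm := by
    have h2 := hG.matrix_eq (α := F)
    rw [hcompl] at h2
    rw [← pow_two, h2]
    simp only [← Nat.cast_smul_eq_nsmul F]
    match_scalars <;>
      · push_cast [hrdef, hsdef, hMdef, Nat.cast_sub hαs, Nat.cast_sub (R := ZMod p) (show 1 ≤ s from hs), Nat.cast_sub (R := ZMod p) (show 1 ≤ α from hα),
          @Nat.cast_mul (ZMod p) _, @Nat.cast_add (ZMod p) _]
        ring
  -- the span set
  set S : Set (Matrix (Fin v) (Fin v) F) := {1, A, Jm} with hSdef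
  -- commutativity of the subalgebra
  have hgen : ∀ u ∈ S, ∀ z ∈ S, u * z = z * u := by
    have h1A : (1 : Matrix (Fin v) (Fin v) F) * A = A * 1 := by rw [Matrix.one_mul, Matrix.mul_one]
    have h1J : (1 : Matrix (Fin v) (Fin v) F) * Jm = Jm * 1 := by
      rw [Matrix.one_mul, Matrix.mul_one]
    have hAJm : A * Jm = Jm * A := by rw [hAJ, hJA]
    rintro u (rfl | rfl | rfl) z (rfl | rfl | rfl) <;>
      simp only [Matrix.one_mul, Matrix.mul_one, hAJm]
  have hcomm : ∀ x y : 𝒜, x * y = y * x := by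
    intro x y
    have hx : (x : Matrix (Fin v) (Fin v) F) ∈ Submodule.span F S := by
      have := x.2
      rwa [← Subalgebra.mem_toSubmodule, h𝒜] at this
    have hy : (y : Matrix (Fin v) (Fin v) F) ∈ Submodule.span F S := by
      have := y.2
      rwa [← Subalgebra.mem_toSubmodule, h𝒜] at this
    have hyc : (y : Matrix (Fin v) (Fin v) F) ∈ Subalgebra.centralizer F S := by
      have hle : Submodule.span F S ≤ Subalgebra.toSubmodule (Subalgebra.centralizer F S) :=
        Submodule.span_le.mpr fun z hz =>
          (Subalgebra.mem_centralizer_iff (R := F)).mpr fun g hg => hgen g hg z hz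
      exact hle hy
    have hxc : (x : Matrix (Fin v) (Fin v) F) ∈
        Subalgebra.centralizer F {(y : Matrix (Fin v) (Fin v) F)} := by
      have hle : Submodule.span F S ≤
          Subalgebra.toSubmodule (Subalgebra.centralizer F {(y : Matrix (Fin v) (Fin v) F)}) :=
        Submodule.span_le.mpr fun z hz =>
          (Subalgebra.mem_centralizer_iff (R := F)).mpr fun g hg => by
            rw [Set.mem_singleton_iff] at hg
            subst hg
            exact ((Subalgebra.mem_centralizer_iff (R := F)).mp hyc z hz).symm
      exact hle hx
    have := (Subalgebra.mem_centralizer_iff (R := F)).mp hxc (y : Matrix (Fin v) (Fin v) F) rfl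
    exact Subtype.ext this.symm
  letI : CommRing 𝒜 := { (inferInstance : Ring 𝒜) with mul_comm := hcomm }
  haveI hfin : Module.Finite F 𝒜 := by
    have hFG : (Subalgebra.toSubmodule 𝒜).FG := by
      rw [h𝒜]
      exact Submodule.fg_span ((Set.finite_singleton Jm).insert A |>.insert 1)
    exact Module.Finite.iff_fg.mpr hFG
  haveI : IsArtinianRing 𝒜 := IsArtinianRing.of_finite F 𝒜
  obtain ⟨N, hN⟩ := IsArtinianRing.isNilpotent_jacobson_bot (R := 𝒜)
  refine eq_bot_iff.mpr fun x hx => ?_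
  have hxN : x ^ N ∈ (Ideal.jacobson (⊥ : Ideal 𝒜)) ^ N := Ideal.pow_mem_pow hx N
  rw [hN] at hxN
  have hxN0 : x ^ N = 0 := Ideal.mem_bot.mp hxN
  have hnil : IsNilpotent (x : Matrix (Fin v) (Fin v) F) := by
    refine ⟨N, ?_⟩
    have h1 : ((x ^ N : 𝒜) : Matrix (Fin v) (Fin v) F) = (x : Matrix (Fin v) (Fin v) F) ^ N :=
      SubmonoidClass.coe_pow x N
    rw [← h1, hxN0, ZeroMemClass.coe_zero]
  have hmem : (x : Matrix (Fin v) (Fin v) F) ∈ Submodule.span F S := by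
    have := x.2
    rwa [← Subalgebra.mem_toSubmodule, h𝒜] at this
  rw [hSdef, Submodule.mem_span_insert] at hmem
  obtain ⟨a, z, hz, hxz⟩ := hmem
  rw [Submodule.mem_span_insert] at hz
  obtain ⟨b, z', hz', hzz⟩ := hz
  rw [Submodule.mem_span_singleton] at hz'
  obtain ⟨c, hc⟩ := hz'
  have hrep : (x : Matrix (Fin v) (Fin v) F) = a • 1 + b • A + c • Jm := by
    rw [hxz, hzz, ← hc, add_assoc]
  rw [hrep] at hnil
  have h0 := auxMain hne hJ hV hrs hJJ hAJ hJA hAA a b c hnil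
  have : (x : Matrix (Fin v) (Fin v) F) = 0 := by rw [hrep, h0]
  exact Ideal.mem_bot.mpr (Subtype.ext this)
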